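/- arXiv:2304.10499 — 2 statements merged into one kernel-verified Lean document; each statement's English description precedes it below -/
import Mathlib

section
/- For the indicator penalty f₂(x) = λ·1{x < τ} with λ, s > 0: if τ - √(2λs) < x < τ then the minimum over v ∈ ℝ of p(v) = (1/(2s))(v - x)² + λ·1{v < τ} is attained at v = τ; if x < τ - √(2λs) or x ≥ τ then the minimum is attained at v = x. -/
/-- The proximal mapping of the indicator penalty `f₂(x) = λ·1{x < τ}`. -/
theorem prox_indicator_penalty (lam s tau x : ℝ) (hlam : 0 < lam) (hs : 0 < s) :
    let p : ℝ → ℝ := fun v => 1 / (2 * s) * (v - x) ^ 2 + (if v < tau then lam else 0)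
    ((tau - Real.sqrt (2 * lam * s) < x → x < tau → ∀ v, p tau ≤ p v) ∧
     ((x < tau - Real.sqrt (2 * lam * s) ∨ tau ≤ x) → ∀ v, p x ≤ p v)) := by
  intro p
  have h2ls : (0:ℝ) ≤ 2 * lam * s := by positivity
  have hsq : Real.sqrt (2 * lam * s) ^ 2 = 2 * lam * s := Real.sq_sqrt h2ls
  have hsqnn : 0 ≤ Real.sqrt (2 * lam * s) := Real.sqrt_nonneg _
  have h2s : (0:ℝ) < 1 / (2 * s) := by positivity
  have hval : 1 / (2 * s) * (2 * lam * s) = lam := by field_simp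
  constructor
  · intro h1 h2 v
    simp only [p]
    rw [if_neg (lt_irrefl tau)]
    by_cases hv : v < tau
    · rw [if_pos hv]
      have key : (tau - x) ^ 2 ≤ 2 * lam * s := by nlinarith
      have := mul_le_mul_of_nonneg_left key h2s.le
      nlinarith [mul_le_mul_of_nonneg_left (sq_nonneg (v - x)) h2s.le]
    · rw [if_neg hv]
      push_neg at hv
      have key : (tau - x) ^ 2 ≤ (v - x) ^ 2 := by nlinarith
      nlinarith [mul_le_mul_of_nonneg_left key h2s.le]
  · intro h v
    simp only [p]
    by_cases hx : x < tau
    · rw [if_pos hx]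
      have hx' : x < tau - Real.sqrt (2 * lam * s) := by
        rcases h with h | h
        · exact h
        · linarith
      by_cases hv : v < tau
      · rw [if_pos hv]
        nlinarith [mul_le_mul_of_nonneg_left (sq_nonneg (v - x)) h2s.le]
      · rw [if_neg hv]
        push_neg at hv
        have key : 2 * lam * s ≤ (v - x) ^ 2 := by nlinarith
        have := mul_le_mul_of_nonneg_left key h2s.le
        nlinarith
    · rw [if_neg hx]
      have hpen : (0:ℝ) ≤ if v < tau then lam else 0 := by
        split <;> linarith
      nlinarith [mul_le_mul_of_nonneg_left (sq_nonneg (v - x)) h2s.le]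
end

section
/- ε-subgradient of an inexact proximal point: let h : ℝ^d → ℝ be convex, s > 0, and suppose z satisfies (1/(2s))‖z - u‖² + h(z) ≤ ε + inf_t [(1/(2s))‖t - u‖² + h(t)]. Then there exists v with ‖v‖ ≤ √(2sε) such that (1/s)(u - z - v) is an ε-subgradient of h at z, i.e. h(y) ≥ h(z) + ⟨(1/s)(u - z - v), y - z⟩ - ε for all y. -/
open RealInnerProductSpace

set_option maxHeartbeats 1600000 in
/-- ε-subgradient property of an inexact proximal point. -/
theorem inexact_prox_eps_subgradient {d : ℕ} (s ε : ℝ) (hs : 0 < s) (hε : 0 ≤ ε)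
    (h : EuclideanSpace ℝ (Fin d) → ℝ) (hconv : ConvexOn ℝ Set.univ h)
    (u z : EuclideanSpace ℝ (Fin d))
    (hz : ∀ t, 1 / (2 * s) * ‖z - u‖ ^ 2 + h z ≤
               ε + (1 / (2 * s) * ‖t - u‖ ^ 2 + h t)) :
    ∃ v : EuclideanSpace ℝ (Fin d), ‖v‖ ≤ Real.sqrt (2 * s * ε) ∧
      ∀ y, h z + ⟪(1 / s) • (u - z - v), y - z⟫ - ε ≤ h y := by
  set φ : EuclideanSpace ℝ (Fin d) → ℝ := fun t => 1 / (2 * s) * ‖t - u‖ ^ 2 + h t with hφ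
  have hh : Continuous h := hconv.locallyLipschitz.continuous
  have hcont : Continuous φ :=
    (continuous_const.mul (((continuous_id.sub continuous_const).norm).pow 2)).add hh
  set R : ℝ := Real.sqrt (8 * s * ε) + 1 with hR
  have hRpos : 0 < R := by positivity
  -- a coercivity-type bound coming from the near-minimality of z
  have key : ∀ t, φ z - 2 * ε + ‖t - z‖ ^ 2 / (4 * s) ≤ φ t := by
    intro t
    have hm := hconv.2 (Set.mem_univ t) (Set.mem_univ z)
      (by norm_num : (0:ℝ) ≤ 1/2) (by norm_num : (0:ℝ) ≤ 1/2) (by norm_num)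
    simp only [smul_eq_mul] at hm
    have hzm := hz ((1/2 : ℝ) • t + (1/2 : ℝ) • z)
    have h1 : (1/2 : ℝ) • t + (1/2 : ℝ) • z - u = (1/2 : ℝ) • ((t - u) + (z - u)) := by
      rw [smul_add]; module
    have h2 : t - z = (t - u) - (z - u) := by abel
    have hpar : ‖(1/2 : ℝ) • t + (1/2 : ℝ) • z - u‖ ^ 2
        = (‖t - u‖ ^ 2 + ‖z - u‖ ^ 2) / 2 - ‖t - z‖ ^ 2 / 4 := by
      rw [h1, h2, norm_smul, Real.norm_eq_abs, abs_of_pos (by norm_num : (0:ℝ) < 1/2),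
        norm_sub_sq_real (t - u) (z - u), mul_pow, norm_add_sq_real (t - u) (z - u)]
      ring
    rw [hpar] at hzm
    simp only [hφ]
    ring_nf at hzm hm ⊢
    linarith [hzm, hm]
  -- existence of a global minimizer of φ
  obtain ⟨w, hwB, hwmin⟩ := (isCompact_closedBall z R).exists_isMinOn
    ⟨z, Metric.mem_closedBall_self hRpos.le⟩ hcont.continuousOn
  have hglobal : ∀ t, φ w ≤ φ t := by
    intro t
    by_cases ht : t ∈ Metric.closedBall z R
    · exact hwmin ht
    · have htz : R < ‖t - z‖ := by
        simpa [Metric.mem_closedBall, dist_eq_norm, not_le] using ht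
      have h8 : 8 * s * ε < ‖t - z‖ ^ 2 := by
        have h1 : Real.sqrt (8 * s * ε) < ‖t - z‖ := by
          calc Real.sqrt (8 * s * ε) < R := by rw [hR]; exact lt_add_one _
          _ < ‖t - z‖ := htz
        nlinarith [Real.sq_sqrt (by positivity : (0:ℝ) ≤ 8 * s * ε),
          Real.sqrt_nonneg (8 * s * ε)]
      have hφz : φ w ≤ φ z := hwmin (Metric.mem_closedBall_self hRpos.le)
      have hk := key t
      have hd : 2 * ε < ‖t - z‖ ^ 2 / (4 * s) := by
        rw [lt_div_iff₀ (by positivity : (0:ℝ) < 4 * s)]; nlinarith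
      simp only [hφ] at hφz hk ⊢
      linarith
  -- exact subgradient of h at w
  set p : EuclideanSpace ℝ (Fin d) := (1 / s) • (u - w) with hp
  have hip : ∀ x : EuclideanSpace ℝ (Fin d), ⟪p, x⟫ = -(1 / s) * ⟪w - u, x⟫ := by
    intro x
    rw [hp, real_inner_smul_left]
    have huw : u - w = -(w - u) := by abel
    rw [huw, inner_neg_left]; ring
  have hsub : ∀ y, h w + ⟪p, y - w⟫ ≤ h y := by
    intro y
    have key2 : ∀ θ : ℝ, 0 < θ → θ ≤ 1 →
        ⟪p, y - w⟫ ≤ h y - h w + θ * (‖y - w‖ ^ 2 / (2 * s)) := by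
      intro θ hθ hθ1
      have hm := hconv.2 (Set.mem_univ w) (Set.mem_univ y)
        (by linarith : (0:ℝ) ≤ 1 - θ) hθ.le (by ring)
      simp only [smul_eq_mul] at hm
      have hmin := hglobal ((1 - θ) • w + θ • y)
      have h1 : (1 - θ) • w + θ • y - u = (w - u) + θ • (y - w) := by
        rw [sub_smul, smul_sub]; module
      have hexp : ‖(1 - θ) • w + θ • y - u‖ ^ 2
          = ‖w - u‖ ^ 2 + 2 * θ * ⟪w - u, y - w⟫ + θ ^ 2 * ‖y - w‖ ^ 2 := by
        rw [h1, norm_add_sq_real, real_inner_smul_right, norm_smul,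
          Real.norm_eq_abs, abs_of_pos hθ]
        ring
      simp only [hφ] at hmin
      rw [hexp] at hmin
      rw [hip]
      have step1 : θ * (h w - h y) ≤
          θ * (⟪w - u, y - w⟫ / s) + θ ^ 2 * (‖y - w‖ ^ 2 / (2 * s)) := by
        have e : 1 / (2*s) * (‖w - u‖^2 + 2*θ*⟪w - u, y - w⟫ + θ^2*‖y - w‖^2)
            = 1 / (2*s) * ‖w - u‖^2 + θ * (⟪w - u, y - w⟫ / s)
              + θ^2 * (‖y - w‖^2 / (2*s)) := by field_simp
        rw [e] at hmin
        linarith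
      have h4 : h w - h y - ⟪w - u, y - w⟫ / s - θ * (‖y - w‖ ^ 2 / (2 * s)) ≤ 0 := by
        refine le_of_mul_le_mul_left ?_ hθ
        rw [mul_zero]
        nlinarith [step1]
      ring_nf at h4 ⊢
      linarith
    rcases eq_or_ne y w with rfl | hyw
    · simpa using key2 1 one_pos le_rfl
    · have hn : 0 < ‖y - w‖ ^ 2 := pow_pos (norm_pos_iff.mpr (sub_ne_zero.mpr hyw)) 2
      have hle : ⟪p, y - w⟫ ≤ h y - h w := by
        apply le_of_forall_pos_le_add
        intro δ hδ
        have hθpos : 0 < min 1 (2 * s * δ / ‖y - w‖ ^ 2) :=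
          lt_min one_pos (by positivity)
        have hk2 := key2 _ hθpos (min_le_left _ _)
        have hbd : min 1 (2 * s * δ / ‖y - w‖ ^ 2) * (‖y - w‖ ^ 2 / (2 * s)) ≤ δ := by
          calc min 1 (2 * s * δ / ‖y - w‖ ^ 2) * (‖y - w‖ ^ 2 / (2 * s))
              ≤ (2 * s * δ / ‖y - w‖ ^ 2) * (‖y - w‖ ^ 2 / (2 * s)) := by
                apply mul_le_mul_of_nonneg_right (min_le_right _ _) (by positivity)
            _ = δ := by field_simp; exact div_self (norm_pos_iff.mpr (sub_ne_zero.mpr hyw)).ne'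
        linarith
      linarith
  -- key algebraic facts relating z and w
  have e1 : ‖z - u‖ ^ 2 = ‖w - u‖ ^ 2 + 2 * ⟪w - u, z - w⟫ + ‖z - w‖ ^ 2 := by
    have e : z - u = (w - u) + (z - w) := by abel
    rw [e, norm_add_sq_real]
  have hzw := hz w
  rw [e1] at hzw
  have hsz := hsub z
  rw [hip] at hsz
  have e3 : 1 / (2*s) * (‖w - u‖^2 + 2*⟪w - u, z - w⟫ + ‖z - w‖^2)
      = 1 / (2*s) * ‖w - u‖^2 + ⟪w - u, z - w⟫ / s + ‖z - w‖^2 / (2*s) := by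
    field_simp
  rw [e3] at hzw
  have e4 : -(1/s) * ⟪w - u, z - w⟫ = -(⟪w - u, z - w⟫ / s) := by ring
  rw [e4] at hsz
  have hB : ‖z - w‖ ^ 2 / (2 * s) ≤ ε := by linarith
  have hv2 : ‖w - z‖ ^ 2 ≤ 2 * s * ε := by
    rw [norm_sub_rev]
    have := (div_le_iff₀ (by positivity : (0:ℝ) < 2 * s)).mp hB
    linarith
  refine ⟨w - z, ?_, ?_⟩
  · have hsq := Real.sqrt_le_sqrt hv2
    rwa [Real.sqrt_sq (norm_nonneg _)] at hsq
  · intro y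
    have huw : u - z - (w - z) = u - w := sub_sub_sub_cancel_right u w z
    rw [huw]
    have hyz : y - z = (y - w) + (w - z) := (sub_add_sub_cancel y w z).symm
    have hwz : w - z = -(z - w) := (neg_sub z w).symm
    rw [hyz, inner_add_right, hwz, inner_neg_right]
    have hεz : h z ≤ h w + (-(⟪w - u, z - w⟫ / s)) + ε := by
      have hBnn : 0 ≤ ‖z - w‖ ^ 2 / (2 * s) := by positivity
      linarith
    have hsy := hsub y
    rw [hip] at hsy
    rw [show ((1:ℝ)/s) • (u - w) = p from hp.symm, hip, hip]
    ring_nf at hεz hsy ⊢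
    linarith [hεz, hsy]
end
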